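/- For t > -1 and positive integers m, k, and any measurable φ:(0,1)→[0,∞), ℱ^{(t)}_{m+k}(𝒢^{(t)}_m φ)(0) = Σ_{j=0}^∞ (1/(k+j)) ℱ^{(t)}_{m+k+j} φ(0). -/

import Mathlib

open MeasureTheory ENNReal

/-- `ℱ^{(t)}_m φ(s) = ∫_s^1 r^{m-1} φ(r)(1-r)^t dr`, as a Lebesgue integral with values
in `[0,∞]`. -/
noncomputable def Fop (t : ℝ) (m : ℕ) (φ : ℝ → ℝ≥0∞) (s : ℝ) : ℝ≥0∞ :=
  ∫⁻ r in Set.Ioo s 1, ENNReal.ofReal (r ^ (m - 1) * (1 - r) ^ t) * φ r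

/-- `𝒢^{(t)}_m φ(s) = ℱ^{(t)}_m φ(s) / (s^m (1-s)^{t+1})`. -/
noncomputable def Gop (t : ℝ) (m : ℕ) (φ : ℝ → ℝ≥0∞) (s : ℝ) : ℝ≥0∞ :=
  Fop t m φ s / ENNReal.ofReal (s ^ m * (1 - s) ^ (t + 1))

open Set

lemma Fop_meas (t : ℝ) (m : ℕ) (φ : ℝ → ℝ≥0∞) : Measurable (Fop t m φ) := by
  have : Antitone (Fop t m φ) := fun a b hab =>
    lintegral_mono_set (fun x hx => ⟨lt_of_le_of_lt hab hx.1, hx.2⟩)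
  exact this.measurable

-- Fubini swap over the triangle 0 < s < r < 1
lemma swap_lemma (f g : ℝ → ℝ≥0∞) (hf : Measurable f) (hg : Measurable g) :
    ∫⁻ s in Ioo (0:ℝ) 1, g s * ∫⁻ r in Ioo s 1, f r
      = ∫⁻ r in Ioo (0:ℝ) 1, (∫⁻ s in Ioo 0 r, g s) * f r := by
  set F : ℝ × ℝ → ℝ≥0∞ := fun p => Set.indicator {p : ℝ × ℝ | p.1 < p.2}
    (fun p => g p.1 * f p.2) p with hF
  have hFm : Measurable F := by
    apply Measurable.indicator
    · exact (hg.comp measurable_fst).mul (hf.comp measurable_snd)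
    · exact measurableSet_lt measurable_fst measurable_snd
  have h1 : ∀ s ∈ Ioo (0:ℝ) 1,
      (∫⁻ r in Ioo (0:ℝ) 1, F (s, r)) = g s * ∫⁻ r in Ioo s 1, f r := by
    intro s hs
    have : (fun r => F (s, r)) = Set.indicator (Ioi s) (fun r => g s * f r) := by
      funext r
      by_cases h : s < r <;> simp [hF, Set.indicator, h]
    rw [this, lintegral_indicator measurableSet_Ioi, Measure.restrict_restrict measurableSet_Ioi]
    have : Ioi s ∩ Ioo (0:ℝ) 1 = Ioo s 1 := by
      ext x; constructor
      · rintro ⟨h1, h2, h3⟩; exact ⟨h1, h3⟩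
      · rintro ⟨h1, h2⟩; exact ⟨h1, lt_trans hs.1 h1, h2⟩
    rw [this, lintegral_const_mul _ hf]
  have h2 : ∀ r ∈ Ioo (0:ℝ) 1,
      (∫⁻ s in Ioo (0:ℝ) 1, F (s, r)) = (∫⁻ s in Ioo 0 r, g s) * f r := by
    intro r hr
    have : (fun s => F (s, r)) = Set.indicator (Iio r) (fun s => g s * f r) := by
      funext s
      by_cases h : s < r <;> simp [hF, Set.indicator, h]
    rw [this, lintegral_indicator measurableSet_Iio, Measure.restrict_restrict measurableSet_Iio]
    have : Iio r ∩ Ioo (0:ℝ) 1 = Ioo 0 r := by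
      ext x; constructor
      · rintro ⟨h1, h2, h3⟩; exact ⟨h2, h1⟩
      · rintro ⟨h1, h2⟩; exact ⟨h2, h1, lt_trans h2 hr.2⟩
    rw [this, lintegral_mul_const _ hg]
  calc ∫⁻ s in Ioo (0:ℝ) 1, g s * ∫⁻ r in Ioo s 1, f r
      = ∫⁻ s in Ioo (0:ℝ) 1, ∫⁻ r in Ioo (0:ℝ) 1, F (s, r) :=
        (setLIntegral_congr_fun measurableSet_Ioo
          (fun s hs => (h1 s hs).symm))
    _ = ∫⁻ r in Ioo (0:ℝ) 1, ∫⁻ s in Ioo (0:ℝ) 1, F (s, r) := by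
        exact lintegral_lintegral_swap (hFm.aemeasurable)
    _ = ∫⁻ r in Ioo (0:ℝ) 1, (∫⁻ s in Ioo 0 r, g s) * f r :=
        setLIntegral_congr_fun measurableSet_Ioo
          (fun r hr => h2 r hr)

lemma pow_lintegral (n : ℕ) (r : ℝ) (hr : 0 ≤ r) :
    ∫⁻ s in Ioo (0:ℝ) r, ENNReal.ofReal (s ^ n) = ENNReal.ofReal (r ^ (n+1) / (n+1)) := by
  have hint : IntegrableOn (fun s : ℝ => s ^ n) (Ioo 0 r) :=
    ((continuous_pow n).integrableOn_Icc (a := 0) (b := r)).mono_set Ioo_subset_Icc_self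
  have hnn : 0 ≤ᵐ[volume.restrict (Ioo (0:ℝ) r)] fun s : ℝ => s ^ n :=
    (ae_restrict_iff' measurableSet_Ioo).2 (Filter.Eventually.of_forall
      (fun x hx => le_of_lt (pow_pos hx.1 n)))
  rw [← ofReal_integral_eq_lintegral_ofReal hint hnn]
  congr 1
  rw [← integral_Ioc_eq_integral_Ioo, ← intervalIntegral.integral_of_le hr, integral_pow]
  simp

lemma expand (t : ℝ) (m k : ℕ) (hm : 0 < m) (hk : 0 < k) (φ : ℝ → ℝ≥0∞) (s : ℝ)
    (hs : s ∈ Ioo (0:ℝ) 1) :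
    ENNReal.ofReal (s ^ (m + k - 1) * (1 - s) ^ t) * Gop t m φ s
      = ∑' j : ℕ, ENNReal.ofReal (s ^ (k + j - 1)) * Fop t m φ s := by
  obtain ⟨hs0, hs1⟩ := hs
  have h1s : 0 < 1 - s := by linarith
  have hb : 0 < s ^ m * (1 - s) ^ (t + 1) := by positivity
  have e3 : ∀ j : ℕ, s ^ (k + j - 1) = s ^ (k - 1) * s ^ j := by
    intro j; rw [← pow_add]; congr 1; omega
  have hsum : Summable fun j : ℕ => s ^ (k + j - 1) :=
    ((summable_geometric_of_lt_one hs0.le hs1).mul_left (s ^ (k - 1))).congr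
      (fun j => (e3 j).symm)
  have key : (s ^ (m + k - 1) * (1 - s) ^ t) / (s ^ m * (1 - s) ^ (t + 1))
      = ∑' j : ℕ, s ^ (k + j - 1) := by
    have e1 : s ^ (m + k - 1) = s ^ m * s ^ (k - 1) := by
      rw [← pow_add]; congr 1; omega
    have e2 : (1 - s) ^ (t + 1) = (1 - s) ^ t * (1 - s) := by
      rw [Real.rpow_add h1s, Real.rpow_one]
    have hts : (1 - s) ^ t ≠ 0 := (Real.rpow_pos_of_pos h1s t).ne'
    rw [tsum_congr e3, tsum_mul_left, tsum_geometric_of_lt_one hs0.le hs1, e1, e2]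
    field_simp
  calc ENNReal.ofReal (s ^ (m + k - 1) * (1 - s) ^ t) * Gop t m φ s
      = ENNReal.ofReal (s ^ (m + k - 1) * (1 - s) ^ t)
          / ENNReal.ofReal (s ^ m * (1 - s) ^ (t + 1)) * Fop t m φ s := by
        rw [Gop, div_eq_mul_inv, div_eq_mul_inv]; ring
    _ = ENNReal.ofReal ((s ^ (m + k - 1) * (1 - s) ^ t) / (s ^ m * (1 - s) ^ (t + 1)))
          * Fop t m φ s := by rw [ENNReal.ofReal_div_of_pos hb]
    _ = ENNReal.ofReal (∑' j : ℕ, s ^ (k + j - 1)) * Fop t m φ s := by rw [key]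
    _ = (∑' j : ℕ, ENNReal.ofReal (s ^ (k + j - 1))) * Fop t m φ s := by
        rw [ENNReal.ofReal_tsum_of_nonneg (fun j => by positivity) hsum]
    _ = ∑' j : ℕ, ENNReal.ofReal (s ^ (k + j - 1)) * Fop t m φ s :=
        ENNReal.tsum_mul_right.symm

theorem stmt_14 (t : ℝ) (ht : -1 < t) (m k : ℕ) (hm : 0 < m) (hk : 0 < k)
    (φ : ℝ → ℝ≥0∞) (hφ : Measurable φ) :
    Fop t (m + k) (Gop t m φ) 0 = ∑' j : ℕ, Fop t (m + k + j) φ 0 / ((k + j : ℕ) : ℝ≥0∞) := by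
  have hψ : Measurable fun r => ENNReal.ofReal (r ^ (m - 1) * (1 - r) ^ t) * φ r := by
    apply Measurable.mul _ hφ
    apply Measurable.ennreal_ofReal
    fun_prop
  have hstep1 : Fop t (m + k) (Gop t m φ) 0
      = ∑' j : ℕ, ∫⁻ s in Ioo (0:ℝ) 1, ENNReal.ofReal (s ^ (k + j - 1)) * Fop t m φ s := by
    rw [Fop, setLIntegral_congr_fun measurableSet_Ioo
      (fun s hs => expand t m k hm hk φ s hs),
      lintegral_tsum (f := fun j s => ENNReal.ofReal (s ^ (k + j - 1)) * Fop t m φ s) (fun j => (((by fun_prop :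
        Measurable fun s : ℝ => ENNReal.ofReal (s ^ (k + j - 1)))).mul
        (Fop_meas t m φ)).aemeasurable)]
  rw [hstep1]
  refine tsum_congr fun j => ?_
  have hc0 : (k + j : ℕ) ≠ 0 := by omega
  have hcR : (0:ℝ) < ((k + j : ℕ) : ℝ) := by positivity
  have hcinv : (((k + j : ℕ) : ℝ≥0∞))⁻¹ ≠ ∞ :=
    ENNReal.inv_ne_top.2 (Nat.cast_ne_zero.2 hc0)
  simp only [Fop]
  rw [swap_lemma (fun r => ENNReal.ofReal (r ^ (m - 1) * (1 - r) ^ t) * φ r)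
    (fun s => ENNReal.ofReal (s ^ (k + j - 1))) hψ
    (measurable_id.pow_const _).ennreal_ofReal]
  have hpt : ∀ r ∈ Ioo (0:ℝ) 1,
      (∫⁻ s in Ioo (0:ℝ) r, ENNReal.ofReal (s ^ (k + j - 1)))
        * (ENNReal.ofReal (r ^ (m - 1) * (1 - r) ^ t) * φ r)
      = ENNReal.ofReal (r ^ (m + k + j - 1) * (1 - r) ^ t) * φ r
          * (((k + j : ℕ) : ℝ≥0∞))⁻¹ := by
    intro r hr
    obtain ⟨hr0, hr1⟩ := hr
    have h1r : (0:ℝ) ≤ 1 - r := by linarith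
    have hnn1 : 0 ≤ r ^ (k + j - 1 + 1) / (((k + j - 1 : ℕ) : ℝ) + 1)
        * (r ^ (m - 1) * (1 - r) ^ t) :=
      mul_nonneg (div_nonneg (pow_nonneg hr0.le _) (by positivity))
        (mul_nonneg (pow_nonneg hr0.le _) (Real.rpow_nonneg h1r t))
    have hnn2 : 0 ≤ r ^ (m + k + j - 1) * (1 - r) ^ t :=
      mul_nonneg (pow_nonneg hr0.le _) (Real.rpow_nonneg h1r t)
    rw [pow_lintegral _ _ hr0.le]
    have hreal : r ^ (k + j - 1 + 1) / (((k + j - 1 : ℕ) : ℝ) + 1)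
        * (r ^ (m - 1) * (1 - r) ^ t)
        = (r ^ (m + k + j - 1) * (1 - r) ^ t) * (((k + j : ℕ) : ℝ))⁻¹ := by
      have h1 : r ^ (k + j - 1 + 1) * r ^ (m - 1) = r ^ (m + k + j - 1) := by
        rw [← pow_add]; congr 1; omega
      have h2 : ((k + j - 1 : ℕ) : ℝ) + 1 = ((k + j : ℕ) : ℝ) := by
        have h3 : (k + j - 1) + 1 = k + j := by omega
        rw [← h3]; push_cast; ring
      rw [h2, div_eq_mul_inv, ← h1]; ring
    rw [← mul_assoc, ← ENNReal.ofReal_mul (le_of_eq_of_le rfl (by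
      exact div_nonneg (pow_nonneg hr0.le _) (by positivity))), hreal,
      ENNReal.ofReal_mul hnn2, ENNReal.ofReal_inv_of_pos hcR,
      ENNReal.ofReal_natCast]
    ring
  rw [setLIntegral_congr_fun measurableSet_Ioo hpt,
    lintegral_mul_const' _ _ hcinv, div_eq_mul_inv]
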